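/- (Theorem 3, solvable case) Let λ₀ ∈ ℝ with det A(λ₀) = 0 and rank A(λ₀) = r, and suppose d(λ₀) is orthogonal to every solution of the adjoint homogeneous system A(λ₀)ᵀ y = 0. Then the set of continuous solutions of the loaded Volterra integral equation (with λ = λ₀) is nonempty and is in bijection with an affine subspace of ℝ^{m−1} of dimension (m−1) − r; that is, the LVIE has a family of solutions depending on (m−1) − r arbitrary constants. -/

import Mathlib

open MeasureTheory Matrix

section LVIEAux
open intervalIntegral Set

noncomputable def iterK (Kt : ℝ → ℝ → ℝ) : ℕ → ℝ → ℝ → ℝ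
  | 0 => Kt
  | n+1 => fun t s => ∫ z in s..t, Kt t z * iterK Kt n z s

theorem iterK_cont {Kt : ℝ → ℝ → ℝ} (hK : Continuous fun q : ℝ × ℝ => Kt q.1 q.2) :
    ∀ n, Continuous fun q : ℝ × ℝ => iterK Kt n q.1 q.2 := by
  intro n
  induction n with
  | zero => exact hK
  | succ n ih =>
    have hg : Continuous (Function.uncurry fun (q : ℝ × ℝ) (z : ℝ) => Kt q.1 z * iterK Kt n z q.2) := by
      apply Continuous.mul
      · exact hK.comp (by fun_prop : Continuous fun p : (ℝ × ℝ) × ℝ => (p.1.1, p.2))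
      · exact ih.comp (by fun_prop : Continuous fun p : (ℝ × ℝ) × ℝ => (p.2, p.1.2))
    have h1 : Continuous fun q : ℝ × ℝ => ∫ z in (0:ℝ)..q.1, Kt q.1 z * iterK Kt n z q.2 :=
      continuous_parametric_intervalIntegral_of_continuous hg continuous_fst
    have h2 : Continuous fun q : ℝ × ℝ => ∫ z in (0:ℝ)..q.2, Kt q.1 z * iterK Kt n z q.2 :=
      continuous_parametric_intervalIntegral_of_continuous hg continuous_snd
    have : (fun q : ℝ × ℝ => iterK Kt (n+1) q.1 q.2) = fun q : ℝ × ℝ =>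
        (∫ z in (0:ℝ)..q.1, Kt q.1 z * iterK Kt n z q.2) -
        ∫ z in (0:ℝ)..q.2, Kt q.1 z * iterK Kt n z q.2 := by
      funext q
      rw [show iterK Kt (n+1) q.1 q.2 = ∫ z in q.2..q.1, Kt q.1 z * iterK Kt n z q.2 from rfl]
      rw [integral_interval_sub_left]
      · exact ((hg.comp (by fun_prop : Continuous fun z : ℝ => ((q : ℝ × ℝ), z))).intervalIntegrable _ _)
      · exact ((hg.comp (by fun_prop : Continuous fun z : ℝ => ((q : ℝ × ℝ), z))).intervalIntegrable _ _)
    rw [this]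
    exact h1.sub h2

theorem iterK_bound {Kt : ℝ → ℝ → ℝ} (hK : Continuous fun q : ℝ × ℝ => Kt q.1 q.2)
    {t₀ T M : ℝ} (hle : t₀ ≤ T)
    (hM : ∀ u v, u ∈ Set.Icc t₀ T → v ∈ Set.Icc t₀ T → |Kt u v| ≤ M) :
    ∀ n, ∀ t s, t₀ ≤ s → s ≤ t → t ≤ T →
      |iterK Kt n t s| ≤ M ^ (n + 1) * (t - s) ^ n / n.factorial := by
  have hM0 : 0 ≤ M := le_trans (abs_nonneg _) (hM t₀ t₀ ⟨le_refl _, hle⟩ ⟨le_refl _, hle⟩)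
  intro n
  induction n with
  | zero =>
    intro t s h1 h2 h3
    simpa [iterK] using hM t s ⟨le_trans h1 h2, h3⟩ ⟨h1, le_trans h2 h3⟩
  | succ n ih =>
    intro t s h1 h2 h3
    have key : |∫ z in s..t, Kt t z * iterK Kt n z s| ≤
        ∫ z in s..t, M * (M ^ (n+1) * (z - s) ^ n / n.factorial) := by
      rw [← Real.norm_eq_abs]
      have := intervalIntegral.norm_integral_le_of_norm_le
        (g := fun z => M * (M ^ (n+1) * (z - s) ^ n / n.factorial))
        (f := fun z => Kt t z * iterK Kt n z s) (μ := volume) (a := s) (b := t)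
        h2 ?_ ?_
      · exact this
      · refine Filter.Eventually.of_forall fun z hz => ?_
        rw [Real.norm_eq_abs, abs_mul]
        apply mul_le_mul (hM t z ⟨le_trans h1 h2, h3⟩ ⟨le_trans h1 hz.1.le, le_trans hz.2 h3⟩)
          (ih z s h1 hz.1.le (le_trans hz.2 h3)) (abs_nonneg _) hM0
      · apply Continuous.intervalIntegrable; fun_prop
    have calc2 : (∫ z in s..t, M * (M ^ (n+1) * (z - s) ^ n / n.factorial)) =
        M ^ (n + 2) * (t - s) ^ (n+1) / (n+1).factorial := by
      rw [intervalIntegral.integral_const_mul]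
      have : (∫ z in s..t, M ^ (n+1) * (z - s) ^ n / n.factorial) =
          (M ^ (n+1) / n.factorial) * ∫ z in s..t, (z - s) ^ n := by
        rw [← intervalIntegral.integral_const_mul]
        congr 1; funext z; ring
      rw [this]
      have : (∫ z in s..t, (z - s) ^ n) = (t - s) ^ (n+1) / (n+1) := by
        rw [show (∫ z in s..t, (z - s) ^ n) = ∫ z in s..t, ((fun y => y ^ n) (z - s)) from rfl]
        rw [intervalIntegral.integral_comp_sub_right (fun y => y ^ n) s]
        simp [integral_pow]
      rw [this, Nat.factorial_succ]
      push_cast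
      field_simp
      ring
    calc |iterK Kt (n+1) t s| = |∫ z in s..t, Kt t z * iterK Kt n z s| := rfl
      _ ≤ _ := key
      _ = M ^ (n + 2) * (t - s) ^ (n+1) / (n+1).factorial := calc2
      _ = M ^ (n + 1 + 1) * (t - s) ^ (n+1) / (n+1).factorial := by norm_num

section Resolvent
variable {Kt : ℝ → ℝ → ℝ} {t₀ T M lam : ℝ}

theorem term_norm_le (hle : t₀ ≤ T)
    (hM : ∀ u v, u ∈ Set.Icc t₀ T → v ∈ Set.Icc t₀ T → |Kt u v| ≤ M)
    (hK : Continuous fun q : ℝ × ℝ => Kt q.1 q.2)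
    (n : ℕ) (t s : ℝ) (h1 : t₀ ≤ s) (h2 : s ≤ t) (h3 : t ≤ T) :
    ‖lam ^ (n+1) * iterK Kt n t s‖ ≤
      (|lam| * M) * ((|lam| * M * (T - t₀)) ^ n / n.factorial) := by
  have hM0 : 0 ≤ M := le_trans (abs_nonneg _) (hM t₀ t₀ ⟨le_refl _, hle⟩ ⟨le_refl _, hle⟩)
  have hb := iterK_bound hK hle hM n t s h1 h2 h3
  rw [Real.norm_eq_abs, abs_mul, abs_pow]
  calc |lam| ^ (n+1) * |iterK Kt n t s| ≤ |lam| ^ (n+1) * (M ^ (n + 1) * (t - s) ^ n / n.factorial) := by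
        apply mul_le_mul_of_nonneg_left hb (by positivity)
    _ ≤ |lam| ^ (n+1) * (M ^ (n + 1) * (T - t₀) ^ n / n.factorial) := by
        apply mul_le_mul_of_nonneg_left _ (by positivity)
        have h4 : (0:ℝ) ≤ t - s := by linarith
        have h5 : t - s ≤ T - t₀ := by linarith
        gcongr
    _ = (|lam| * M) * ((|lam| * M * (T - t₀)) ^ n / n.factorial) := by
        rw [mul_pow, mul_pow, pow_succ, pow_succ]
        ring

theorem sum_aux (C x : ℝ) : Summable fun n : ℕ => C * (x ^ n / n.factorial) :=
  (Real.summable_pow_div_factorial x).mul_left C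

theorem term_summable (hle : t₀ ≤ T)
    (hM : ∀ u v, u ∈ Set.Icc t₀ T → v ∈ Set.Icc t₀ T → |Kt u v| ≤ M)
    (hK : Continuous fun q : ℝ × ℝ => Kt q.1 q.2)
    (t s : ℝ) (h1 : t₀ ≤ s) (h2 : s ≤ t) (h3 : t ≤ T) :
    Summable fun n : ℕ => lam ^ (n+1) * iterK Kt n t s :=
  Summable.of_norm_bounded (sum_aux (|lam| * M) (|lam| * M * (T - t₀)))
    (fun n => term_norm_le hle hM hK n t s h1 h2 h3)

theorem Rser_contOn (hle : t₀ ≤ T)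
    (hM : ∀ u v, u ∈ Set.Icc t₀ T → v ∈ Set.Icc t₀ T → |Kt u v| ≤ M)
    (hK : Continuous fun q : ℝ × ℝ => Kt q.1 q.2) :
    ContinuousOn (fun q : ℝ × ℝ => ∑' n : ℕ, lam ^ (n+1) * iterK Kt n q.1 q.2)
      {q : ℝ × ℝ | t₀ ≤ q.2 ∧ q.2 ≤ q.1 ∧ q.1 ≤ T} := by
  apply TendstoUniformlyOn.continuousOn
    (tendstoUniformlyOn_tsum_nat (f := fun n (q : ℝ × ℝ) => lam ^ (n+1) * iterK Kt n q.1 q.2)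
      (sum_aux (|lam| * M) (|lam| * M * (T - t₀)))
      (fun n q hq => term_norm_le hle hM hK n q.1 q.2 hq.1 hq.2.1 hq.2.2))
  exact Filter.Frequently.of_forall fun N => continuousOn_finset_sum _ fun i _ =>
    (continuous_const.mul (iterK_cont hK i)).continuousOn

theorem resolvent_identity (hle : t₀ ≤ T)
    (hM : ∀ u v, u ∈ Set.Icc t₀ T → v ∈ Set.Icc t₀ T → |Kt u v| ≤ M)
    (hK : Continuous fun q : ℝ × ℝ => Kt q.1 q.2)
    (t s : ℝ) (h1 : t₀ ≤ s) (h2 : s ≤ t) (h3 : t ≤ T) :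
    (∑' n : ℕ, lam ^ (n+1) * iterK Kt n t s) =
      lam * Kt t s + lam * ∫ z in s..t, Kt t z * ∑' n : ℕ, lam ^ (n+1) * iterK Kt n z s := by
  have hM0 : 0 ≤ M := le_trans (abs_nonneg _) (hM t₀ t₀ ⟨le_refl _, hle⟩ ⟨le_refl _, hle⟩)
  set F : ℕ → ℝ → ℝ := fun n z => lam ^ (n+1) * (Kt t z * iterK Kt n z s) with hFdef
  have hcont : ∀ n, Continuous (F n) := by
    intro n
    apply Continuous.mul continuous_const
    exact Continuous.mul (hK.comp (by fun_prop : Continuous fun z : ℝ => (t, z)))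
      ((iterK_cont hK n).comp (by fun_prop : Continuous fun z : ℝ => (z, s)))
  have step1 : (∫ z in s..t, Kt t z * ∑' n : ℕ, lam ^ (n+1) * iterK Kt n z s) =
      ∫ z in s..t, ∑' n : ℕ, F n z := by
    apply intervalIntegral.integral_congr
    intro z hz
    rw [Set.uIcc_of_le h2, Set.mem_Icc] at hz
    show Kt t z * _ = _
    rw [← tsum_mul_left]
    apply tsum_congr
    intro n; dsimp [F]; ring
  -- interchange sum and integral
  have hintIoc : ∀ n, IntegrableOn (F n) (Set.Ioc s t) volume := fun n =>
    (hcont n).integrableOn_Ioc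
  have hbnd : ∀ n, ∀ z ∈ Set.Ioc s t, ‖F n z‖ ≤
      M * ((|lam| * M) * ((|lam| * M * (T - t₀)) ^ n / n.factorial)) := by
    intro n z hz
    show ‖lam ^ (n+1) * (Kt t z * iterK Kt n z s)‖ ≤ _
    rw [Real.norm_eq_abs, abs_mul, abs_mul, ← mul_assoc]
    have hzs : (z - s) ^ n ≤ (T - t₀) ^ n := by
      have h4 : (0:ℝ) ≤ z - s := by linarith [hz.1.le]
      have h5 : z - s ≤ T - t₀ := by linarith [hz.1.le, le_trans hz.2 h3]
      gcongr
    calc |lam ^ (n+1)| * |Kt t z| * |iterK Kt n z s|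
        ≤ |lam ^ (n+1)| * M * |iterK Kt n z s| :=
          mul_le_mul_of_nonneg_right (mul_le_mul_of_nonneg_left
            (hM t z ⟨le_trans h1 h2, h3⟩ ⟨le_trans h1 hz.1.le, le_trans hz.2 h3⟩)
            (abs_nonneg _)) (abs_nonneg _)
      _ ≤ |lam ^ (n+1)| * M * (M ^ (n + 1) * (z - s) ^ n / n.factorial) :=
          mul_le_mul_of_nonneg_left
            (iterK_bound hK hle hM n z s h1 hz.1.le (le_trans hz.2 h3))
            (mul_nonneg (abs_nonneg _) hM0)
      _ ≤ |lam ^ (n+1)| * M * (M ^ (n + 1) * (T - t₀) ^ n / n.factorial) :=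
          mul_le_mul_of_nonneg_left
            (div_le_div_of_nonneg_right (mul_le_mul_of_nonneg_left hzs (pow_nonneg hM0 _))
              (by positivity))
            (mul_nonneg (abs_nonneg _) hM0)
      _ = M * ((|lam| * M) * ((|lam| * M * (T - t₀)) ^ n / n.factorial)) := by
          rw [abs_pow, mul_pow, mul_pow, pow_succ, pow_succ]; ring
  have hsum' : Summable fun n : ℕ => ∫ z in Set.Ioc s t, ‖F n z‖ := by
    apply Summable.of_nonneg_of_le
      (fun n => integral_nonneg (fun z => norm_nonneg _))
      (fun n => ?_)
      (((sum_aux (|lam| * M) (|lam| * M * (T - t₀))).mul_left M).mul_left (t - s))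
    have h0 : (∫ z in Set.Ioc s t, ‖F n z‖) ≤
        ∫ _z in Set.Ioc s t, M * ((|lam| * M) * ((|lam| * M * (T - t₀)) ^ n / n.factorial)) := by
      apply setIntegral_mono_on ((hintIoc n).norm)
        (integrableOn_const measure_Ioc_lt_top.ne) measurableSet_Ioc
      exact hbnd n
    refine h0.trans_eq ?_
    rw [setIntegral_const, smul_eq_mul, Real.volume_real_Ioc_of_le h2]
  have interchange : (∫ z in Set.Ioc s t, ∑' n : ℕ, F n z) =
      ∑' n : ℕ, ∫ z in Set.Ioc s t, F n z :=
    (integral_tsum_of_summable_integral_norm hintIoc hsum').symm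
  have hterm : ∀ n : ℕ, (∫ z in Set.Ioc s t, F n z) = lam ^ (n+1) * iterK Kt (n+1) t s := by
    intro n
    rw [← intervalIntegral.integral_of_le h2]
    show (∫ z in s..t, lam ^ (n+1) * (Kt t z * iterK Kt n z s)) = _
    rw [intervalIntegral.integral_const_mul]
    rfl
  rw [step1, intervalIntegral.integral_of_le h2, interchange]
  have : (∑' n : ℕ, ∫ z in Set.Ioc s t, F n z) = ∑' n : ℕ, lam ^ (n+1) * iterK Kt (n+1) t s :=
    tsum_congr hterm
  rw [this, ← tsum_mul_left,
    Summable.tsum_eq_zero_add (term_summable hle hM hK t s h1 h2 h3)]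
  congr 1
  · show lam ^ 1 * Kt t s = lam * Kt t s
    rw [pow_one]
  · apply tsum_congr
    intro n
    rw [pow_succ]
    ring

end Resolvent

open Set in
theorem triangle_swap (H : ℝ → ℝ → ℝ) (hH : Continuous fun q : ℝ × ℝ => H q.1 q.2)
    {c t : ℝ} (hct : c ≤ t) :
    (∫ s in c..t, ∫ u in c..s, H s u) = ∫ u in c..t, ∫ s in u..t, H s u := by
  obtain ⟨C, hC⟩ := (isCompact_Icc.prod isCompact_Icc).exists_bound_of_continuousOn
    (s := Icc c t ×ˢ Icc c t) hH.continuousOn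
  set I := Ioc c t with hI
  set G : ℝ × ℝ → ℝ := fun q => if q.2 < q.1 then H q.1 q.2 else 0 with hG
  have hGm : StronglyMeasurable G := by
    apply StronglyMeasurable.ite (measurableSet_lt measurable_snd measurable_fst)
      hH.stronglyMeasurable stronglyMeasurable_const
  have hfin : IsFiniteMeasure ((volume : Measure ℝ).restrict I) :=
    ⟨by simpa [Measure.restrict_apply_univ] using measure_Ioc_lt_top⟩
  have hGbound : ∀ q : ℝ × ℝ, q.1 ∈ I → q.2 ∈ I → ‖G q‖ ≤ |C| := by
    rintro ⟨s, u⟩ hs hu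
    by_cases h : u < s
    · have : ‖H s u‖ ≤ C := hC (s, u) ⟨⟨hs.1.le, hs.2⟩, ⟨hu.1.le, hu.2⟩⟩
      simpa only [hG, if_pos h] using this.trans (le_abs_self C)
    · simp only [hG, if_neg h, norm_zero]
      exact abs_nonneg C
  have hmeas1 : ∀ s : ℝ, AEStronglyMeasurable (fun u => G (s, u)) volume :=
    fun s => (hGm.comp_measurable (measurable_const.prodMk measurable_id)).aestronglyMeasurable
  have hmeas2 : ∀ u : ℝ, AEStronglyMeasurable (fun s => G (s, u)) volume :=
    fun u => (hGm.comp_measurable (measurable_id.prodMk measurable_const)).aestronglyMeasurable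
  have hslice1 : ∀ s ∈ I, IntegrableOn (fun u => G (s, u)) I volume := by
    intro s hs
    apply Measure.integrableOn_of_bounded (M := |C|) measure_Ioc_lt_top.ne (hmeas1 s)
    filter_upwards [ae_restrict_mem measurableSet_Ioc] with u hu
    exact hGbound (s, u) hs hu
  have hslice2 : ∀ u ∈ I, IntegrableOn (fun s => G (s, u)) I volume := by
    intro u hu
    apply Measure.integrableOn_of_bounded (M := |C|) measure_Ioc_lt_top.ne (hmeas2 u)
    filter_upwards [ae_restrict_mem measurableSet_Ioc] with s hs
    exact hGbound (s, u) hs hu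
  have hGint : Integrable (fun q : ℝ × ℝ => G q)
      ((volume.restrict I).prod (volume.restrict I)) := by
    refine Integrable.mono' (g := fun _ => |C|) (integrable_const _)
      hGm.aestronglyMeasurable ?_
    rw [Measure.prod_restrict]
    filter_upwards [ae_restrict_mem (measurableSet_Ioc.prod measurableSet_Ioc)] with q hq
    exact hGbound q hq.1 hq.2
  -- LHS
  have hLHS : (∫ s in c..t, ∫ u in c..s, H s u) = ∫ s in I, ∫ u in I, G (s, u) := by
    rw [intervalIntegral.integral_of_le hct]
    apply setIntegral_congr_fun measurableSet_Ioc
    intro s hs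
    have hcs : c ≤ s := hs.1.le
    have hst : s ≤ t := hs.2
    show (∫ u in c..s, H s u) = ∫ u in I, G (s, u)
    rw [intervalIntegral.integral_of_le hcs]
    have hsplit : I = Ioc c s ∪ Ioc s t := by rw [hI, Ioc_union_Ioc_eq_Ioc hcs hst]
    have e1 : (∫ u in I, G (s, u)) =
        (∫ u in Ioc c s, G (s, u)) + ∫ u in Ioc s t, G (s, u) := by
      rw [hsplit]
      exact setIntegral_union (Ioc_disjoint_Ioc_of_le le_rfl) measurableSet_Ioc
        ((hslice1 s hs).mono_set (hsplit ▸ subset_union_left))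
        ((hslice1 s hs).mono_set (hsplit ▸ subset_union_right))
    have e2 : (∫ u in Ioc s t, G (s, u)) = 0 := by
      rw [setIntegral_congr_fun measurableSet_Ioc
        (fun u hu => by simp only [hG]; rw [if_neg (not_lt.2 hu.1.le)]), MeasureTheory.integral_zero]
    have e3 : (∫ u in Ioc c s, G (s, u)) = ∫ u in Ioc c s, H s u := by
      apply setIntegral_congr_ae measurableSet_Ioc
      have hne : ∀ᵐ u : ℝ, u ≠ s := by
        refine ae_iff.mpr ?_
        simp only [Ne, not_not, setOf_eq_eq_singleton]
        exact measure_singleton s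
      filter_upwards [hne] with u hu hmem
      simp only [hG]
      rw [if_pos (lt_of_le_of_ne hmem.2 hu)]
    rw [e1, e2, e3, add_zero]
  -- RHS
  have hRHS : (∫ u in c..t, ∫ s in u..t, H s u) = ∫ u in I, ∫ s in I, G (s, u) := by
    rw [intervalIntegral.integral_of_le hct]
    apply setIntegral_congr_fun measurableSet_Ioc
    intro u hu
    have hcu : c ≤ u := hu.1.le
    have hut : u ≤ t := hu.2
    show (∫ s in u..t, H s u) = ∫ s in I, G (s, u)
    rw [intervalIntegral.integral_of_le hut]
    have hsplit : I = Ioc c u ∪ Ioc u t := by rw [hI, Ioc_union_Ioc_eq_Ioc hcu hut]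
    have e1 : (∫ s in I, G (s, u)) =
        (∫ s in Ioc c u, G (s, u)) + ∫ s in Ioc u t, G (s, u) := by
      rw [hsplit]
      exact setIntegral_union (Ioc_disjoint_Ioc_of_le le_rfl) measurableSet_Ioc
        ((hslice2 u hu).mono_set (hsplit ▸ subset_union_left))
        ((hslice2 u hu).mono_set (hsplit ▸ subset_union_right))
    have e2 : (∫ s in Ioc c u, G (s, u)) = 0 := by
      rw [setIntegral_congr_fun measurableSet_Ioc
        (fun s hs => by simp only [hG]; rw [if_neg (not_lt.2 hs.2)]), MeasureTheory.integral_zero]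
    have e3 : (∫ s in Ioc u t, G (s, u)) = ∫ s in Ioc u t, H s u :=
      setIntegral_congr_fun measurableSet_Ioc
        (fun s hs => by simp only [hG]; rw [if_pos hs.1])
    rw [e1, e2, e3, zero_add]
  rw [hLHS, hRHS]
  exact integral_integral_swap (f := fun s u => G (s, u)) hGint

theorem volterra_unique {Kt : ℝ → ℝ → ℝ} {t₀ T M lam : ℝ} (hle : t₀ ≤ T)
    (hK : Continuous fun q : ℝ × ℝ => Kt q.1 q.2)
    (hM : ∀ u v, u ∈ Set.Icc t₀ T → v ∈ Set.Icc t₀ T → |Kt u v| ≤ M)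
    (x : ℝ → ℝ) (hx : ContinuousOn x (Set.Icc t₀ T))
    (heq : ∀ t ∈ Set.Icc t₀ T, x t = lam * ∫ s in t₀..t, Kt t s * x s) :
    ∀ t ∈ Set.Icc t₀ T, x t = 0 := by
  have hM0 : 0 ≤ M := le_trans (abs_nonneg _) (hM t₀ t₀ ⟨le_refl _, hle⟩ ⟨le_refl _, hle⟩)
  obtain ⟨C, hC⟩ := isCompact_Icc.exists_bound_of_continuousOn (s := Set.Icc t₀ T) hx
  have claim : ∀ n : ℕ, ∀ t ∈ Set.Icc t₀ T,
      |x t| ≤ C * ((|lam| * M) ^ n * (t - t₀) ^ n / n.factorial) := by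
    intro n
    induction n with
    | zero =>
      intro t htm
      simpa using (Real.norm_eq_abs (x t) ▸ hC t htm)
    | succ n ih =>
      intro t htm
      obtain ⟨ht1, ht2⟩ := htm
      have hxint : IntervalIntegrable (fun s => Kt t s * x s) volume t₀ t := by
        apply ContinuousOn.intervalIntegrable
        rw [Set.uIcc_of_le ht1]
        apply ContinuousOn.mul
        · exact (hK.comp (by fun_prop : Continuous fun s : ℝ => (t, s))).continuousOn
        · exact hx.mono (Set.Icc_subset_Icc le_rfl ht2)
      have key : |∫ s in t₀..t, Kt t s * x s| ≤
          ∫ s in t₀..t, M * (C * ((|lam| * M) ^ n * (s - t₀) ^ n / n.factorial)) := by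
        rw [← Real.norm_eq_abs]
        have := intervalIntegral.norm_integral_le_of_norm_le
          (g := fun s => M * (C * ((|lam| * M) ^ n * (s - t₀) ^ n / n.factorial)))
          (f := fun s => Kt t s * x s) (μ := volume) (a := t₀) (b := t) ht1 ?_ ?_
        · exact this
        · refine Filter.Eventually.of_forall fun s hs => ?_
          rw [Real.norm_eq_abs, abs_mul]
          apply mul_le_mul (hM t s ⟨ht1, ht2⟩ ⟨hs.1.le, le_trans hs.2 ht2⟩)
            (ih s ⟨hs.1.le, le_trans hs.2 ht2⟩)
            (abs_nonneg _) hM0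
        · apply Continuous.intervalIntegrable; fun_prop
      have calc2 : (∫ s in t₀..t, M * (C * ((|lam| * M) ^ n * (s - t₀) ^ n / n.factorial))) =
          M * C * (|lam| * M) ^ n * ((t - t₀) ^ (n+1) / ((n+1) * n.factorial)) := by
        rw [intervalIntegral.integral_const_mul]
        have : (∫ s in t₀..t, C * ((|lam| * M) ^ n * (s - t₀) ^ n / n.factorial)) =
            (C * (|lam| * M) ^ n / n.factorial) * ∫ s in t₀..t, (s - t₀) ^ n := by
          rw [← intervalIntegral.integral_const_mul]
          congr 1; funext z; ring
        rw [this]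
        have : (∫ s in t₀..t, (s - t₀) ^ n) = (t - t₀) ^ (n+1) / (n+1) := by
          rw [show (∫ s in t₀..t, (s - t₀) ^ n) = ∫ s in t₀..t, ((fun y => y ^ n) (s - t₀)) from rfl]
          rw [intervalIntegral.integral_comp_sub_right (fun y => y ^ n) t₀]
          simp [integral_pow]
        rw [this]
        field_simp
      calc |x t| = |lam * ∫ s in t₀..t, Kt t s * x s| := by rw [heq t ⟨ht1, ht2⟩]
        _ = |lam| * |∫ s in t₀..t, Kt t s * x s| := abs_mul _ _
        _ ≤ |lam| * ∫ s in t₀..t, M * (C * ((|lam| * M) ^ n * (s - t₀) ^ n / n.factorial)) := by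
            apply mul_le_mul_of_nonneg_left key (abs_nonneg _)
        _ = C * ((|lam| * M) ^ (n+1) * (t - t₀) ^ (n+1) / (n+1).factorial) := by
            rw [calc2, Nat.factorial_succ]
            push_cast
            rw [pow_succ]
            ring
  intro t htm
  have hxle : ∀ n : ℕ, |x t| ≤ C * ((|lam| * M * (t - t₀)) ^ n / n.factorial) := by
    intro n
    have := claim n t htm
    rwa [show (|lam| * M) ^ n * (t - t₀) ^ n = (|lam| * M * (t - t₀)) ^ n by rw [mul_pow, mul_pow]; ring] at this
  have hlim : Filter.Tendsto (fun n : ℕ => C * ((|lam| * M * (t - t₀)) ^ n / n.factorial))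
      Filter.atTop (nhds 0) := by
    have := (FloorSemiring.tendsto_pow_div_factorial_atTop (K := ℝ) (|lam| * M * (t - t₀))).const_mul C
    simpa using this
  have : |x t| ≤ 0 := ge_of_tendsto hlim (Filter.Eventually.of_forall hxle)
  exact abs_nonpos_iff.mp this

theorem volterra_solves {Kt Rt : ℝ → ℝ → ℝ} {t₀ T M lam : ℝ} (hle : t₀ ≤ T)
    (hK : Continuous fun q : ℝ × ℝ => Kt q.1 q.2)
    (hM : ∀ u v, u ∈ Set.Icc t₀ T → v ∈ Set.Icc t₀ T → |Kt u v| ≤ M)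
    (hRt : Continuous fun q : ℝ × ℝ => Rt q.1 q.2)
    (hRser : ∀ q : ℝ × ℝ, t₀ ≤ q.2 → q.2 ≤ q.1 → q.1 ≤ T →
      Rt q.1 q.2 = ∑' n : ℕ, lam ^ (n+1) * iterK Kt n q.1 q.2)
    (g : ℝ → ℝ) (hg : Continuous g)
    (t : ℝ) (h1 : t₀ ≤ t) (h2 : t ≤ T) :
    (g t + ∫ s in t₀..t, Rt t s * g s) =
      lam * (∫ s in t₀..t, Kt t s * (g s + ∫ u in t₀..s, Rt s u * g u)) + g t := by
  have hXc : Continuous fun s : ℝ => g s + ∫ u in t₀..s, Rt s u * g u := by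
    apply hg.add
    apply continuous_parametric_intervalIntegral_of_continuous _ continuous_id
    exact Continuous.mul (hRt.comp (by fun_prop : Continuous fun p : ℝ × ℝ => (p.1, p.2)))
      (hg.comp continuous_snd)
  have hKtcont : ∀ t' : ℝ, Continuous fun s => Kt t' s :=
    fun t' => hK.comp (by fun_prop : Continuous fun s : ℝ => (t', s))
  have hRtcont1 : Continuous fun s => Rt t s :=
    hRt.comp (by fun_prop : Continuous fun s : ℝ => (t, s))
  have split : (∫ s in t₀..t, Kt t s * (g s + ∫ u in t₀..s, Rt s u * g u)) =
      (∫ s in t₀..t, Kt t s * g s) +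
        ∫ s in t₀..t, Kt t s * ∫ u in t₀..s, Rt s u * g u := by
    rw [← intervalIntegral.integral_add]
    · congr 1; funext s; ring
    · exact (((hKtcont t).mul hg)).intervalIntegrable _ _
    · apply Continuous.intervalIntegrable
      apply (hKtcont t).mul
      apply continuous_parametric_intervalIntegral_of_continuous _ continuous_id
      exact Continuous.mul (hRt.comp (by fun_prop : Continuous fun p : ℝ × ℝ => (p.1, p.2)))
        (hg.comp continuous_snd)
  set H : ℝ → ℝ → ℝ := fun s u => Kt t s * (Rt s u * g u) with hH
  have hHcont : Continuous fun q : ℝ × ℝ => H q.1 q.2 := by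
    apply Continuous.mul ((hKtcont t).comp continuous_fst)
    exact Continuous.mul (hRt.comp (by fun_prop : Continuous fun q : ℝ × ℝ => (q.1, q.2)))
      (hg.comp continuous_snd)
  have inner_pull : (∫ s in t₀..t, Kt t s * ∫ u in t₀..s, Rt s u * g u) =
      ∫ s in t₀..t, ∫ u in t₀..s, H s u := by
    apply intervalIntegral.integral_congr
    intro s _
    show Kt t s * _ = _
    rw [← intervalIntegral.integral_const_mul]
  have swap : (∫ s in t₀..t, ∫ u in t₀..s, H s u) = ∫ u in t₀..t, ∫ s in u..t, H s u :=
    triangle_swap H hHcont h1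
  have inner_eval : ∀ u, t₀ ≤ u → u ≤ t →
      lam * ∫ s in u..t, H s u = (Rt t u - lam * Kt t u) * g u := by
    intro u hu1 hu2
    have e1 : (∫ s in u..t, H s u) = (∫ s in u..t, Kt t s * Rt s u) * g u := by
      rw [← intervalIntegral.integral_mul_const]
      apply intervalIntegral.integral_congr
      intro s _
      show Kt t s * (Rt s u * g u) = Kt t s * Rt s u * g u
      ring
    have e2 : (∫ s in u..t, Kt t s * Rt s u) =
        ∫ s in u..t, Kt t s * ∑' n : ℕ, lam ^ (n+1) * iterK Kt n s u := by
      apply intervalIntegral.integral_congr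
      intro s hs
      rw [Set.uIcc_of_le hu2, Set.mem_Icc] at hs
      show Kt t s * Rt s u = _
      rw [hRser (s, u) hu1 hs.1 (le_trans hs.2 h2)]
    have e3 := resolvent_identity (lam := lam) hle hM hK t u hu1 hu2 h2
    have e4 : Rt t u = ∑' n : ℕ, lam ^ (n+1) * iterK Kt n t u := hRser (t, u) hu1 hu2 h2
    rw [e1, ← mul_assoc, e2, show lam * (∫ s in u..t, Kt t s * ∑' n : ℕ,
      lam ^ (n+1) * iterK Kt n s u) = Rt t u - lam * Kt t u by rw [e4, e3]; ring]
  have outer : lam * (∫ u in t₀..t, ∫ s in u..t, H s u) =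
      (∫ u in t₀..t, Rt t u * g u) - lam * ∫ u in t₀..t, Kt t u * g u := by
    rw [← intervalIntegral.integral_const_mul]
    have : (∫ u in t₀..t, lam * ∫ s in u..t, H s u) =
        ∫ u in t₀..t, (Rt t u * g u - lam * (Kt t u * g u)) := by
      apply intervalIntegral.integral_congr
      intro u hu
      rw [Set.uIcc_of_le h1, Set.mem_Icc] at hu
      show lam * ∫ s in u..t, H s u = _
      rw [inner_eval u hu.1 hu.2]
      ring
    rw [this, intervalIntegral.integral_sub, intervalIntegral.integral_const_mul]
    · exact ((hRtcont1.mul hg)).intervalIntegrable _ _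
    · exact (continuous_const.mul ((hKtcont t).mul hg)).intervalIntegrable _ _
  rw [split, mul_add, inner_pull, swap, outer]
  ring

end LVIEAux

theorem slae_solution_affine {n : ℕ} (A : Matrix (Fin n) (Fin n) ℝ) (d : Fin n → ℝ) (r : ℕ)
    (hrank : A.rank = r)
    (horth : ∀ y, Aᵀ *ᵥ y = 0 → d ⬝ᵥ y = 0) :
    ∃ c₀, A *ᵥ c₀ = d ∧ ∃ W : Submodule ℝ (Fin n → ℝ), Module.finrank ℝ W = n - r ∧
      {c : Fin n → ℝ | A *ᵥ c = d} = (fun w => c₀ + w) '' (W : Set (Fin n → ℝ)) := by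
  classical
  set E := EuclideanSpace ℝ (Fin n)
  let e : E ≃ₗ[ℝ] (Fin n → ℝ) := WithLp.linearEquiv 2 ℝ (Fin n → ℝ)
  let V : Submodule ℝ E := (LinearMap.range A.mulVecLin).comap (e : E →ₗ[ℝ] (Fin n → ℝ))
  have hd : (e.symm d) ∈ V := by
    by_contra hd
    set d' : E := e.symm d with hd'
    set y' : E := d' - (V.orthogonalProjection d' : E) with hy'
    have hy'o : y' ∈ Vᗮ := Submodule.sub_starProjection_mem_orthogonal (K := V) d'
    have hy'ne : y' ≠ 0 := by
      intro h
      apply hd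
      have : d' = (V.orthogonalProjection d' : E) := by
        have := sub_eq_zero.mp h
        exact this
      rw [hd'] at this ⊢
      rw [this]
      exact (V.orthogonalProjection d').2
    set y : Fin n → ℝ := e y' with hy
    have hAty : Aᵀ *ᵥ y = 0 := by
      funext i
      have hv : e.symm (A *ᵥ Pi.single i 1) ∈ V := by
        simp only [V, Submodule.mem_comap]
        rw [LinearEquiv.coe_coe, LinearEquiv.apply_symm_apply]
        exact ⟨Pi.single i 1, rfl⟩
      have hinner : inner (𝕜 := ℝ) (e.symm (A *ᵥ Pi.single i 1)) y' = 0 :=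
        Submodule.inner_right_of_mem_orthogonal hv hy'o
      rw [PiLp.inner_apply] at hinner
      simp only [RCLike.inner_apply, conj_trivial] at hinner
      have : ∀ k, (e.symm (A *ᵥ Pi.single i 1) : EuclideanSpace ℝ (Fin n)) k
          = A k i := by
        intro k
        show (A *ᵥ Pi.single i 1) k = A k i
        rw [Matrix.mulVec_single]
        exact mul_one _
      simp only [this] at hinner
      have hyk : ∀ k, y' k = y k := fun k => rfl
      simp only [hyk] at hinner
      simpa [Matrix.mulVec, dotProduct, Matrix.transpose_apply, mul_comm] using hinner
    have hd0 := horth y hAty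
    have hproj : inner (𝕜 := ℝ) ((V.orthogonalProjection d' : E)) y' = 0 :=
      Submodule.inner_right_of_mem_orthogonal (V.orthogonalProjection d').2 hy'o
    have hdy : inner (𝕜 := ℝ) d' y' = 0 := by
      have : ∀ k, (d' : EuclideanSpace ℝ (Fin n)) k = d k := fun k => rfl
      rw [PiLp.inner_apply]
      simp only [RCLike.inner_apply, conj_trivial, this]
      simpa [dotProduct, mul_comm, show ∀ k, y'.ofLp k = y k from fun k => rfl] using hd0
    have : inner (𝕜 := ℝ) y' y' = 0 := by
      have hsplit : d' = y' + (V.orthogonalProjection d' : E) := by rw [hy']; abel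
      rw [hsplit, inner_add_left, hproj, add_zero] at hdy
      rw [← inner_conj_symm] at hdy
      simpa using hdy
    exact hy'ne (inner_self_eq_zero.mp this)
  have hrange : d ∈ LinearMap.range A.mulVecLin := by
    have := hd
    simp only [V, Submodule.mem_comap, LinearEquiv.coe_coe, LinearEquiv.apply_symm_apply] at this
    exact this
  obtain ⟨c₀, hc₀⟩ := hrange
  rw [Matrix.mulVecLin_apply] at hc₀
  refine ⟨c₀, hc₀, LinearMap.ker A.mulVecLin, ?_, ?_⟩
  · have h1 := LinearMap.finrank_range_add_finrank_ker A.mulVecLin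
    rw [Module.finrank_fin_fun] at h1
    have h2 : Module.finrank ℝ (LinearMap.range A.mulVecLin) = r := by
      rw [← hrank]; rfl
    omega
  · ext c
    simp only [Set.mem_setOf_eq, Set.mem_image, SetLike.mem_coe, LinearMap.mem_ker]
    constructor
    · intro hc
      refine ⟨c - c₀, ?_, by abel⟩
      rw [Matrix.mulVecLin_apply, Matrix.mulVec_sub, hc, hc₀, sub_self]
    · rintro ⟨w, hw, rfl⟩
      rw [Matrix.mulVecLin_apply] at hw
      rw [Matrix.mulVec_add, hc₀, hw, add_zero]

theorem exists_cont_extension {X : Type*} [TopologicalSpace X] [NormalSpace X] {s : Set X}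
    (hs : IsClosed s) {f : X → ℝ} (hf : ContinuousOn f s) :
    ∃ g : X → ℝ, Continuous g ∧ ∀ x ∈ s, g x = f x := by
  obtain ⟨g, hg⟩ := ContinuousMap.exists_restrict_eq hs (⟨s.restrict f, hf.restrict⟩ : C(s, ℝ))
  refine ⟨g, g.continuous, fun x hx => ?_⟩
  have := congrFun (congrArg DFunLike.coe hg) ⟨x, hx⟩
  exact this

/-- Theorem 3 (solvable case): if det A(λ₀) = 0, rank A(λ₀) = r and d(λ₀) is
orthogonal to every solution of the adjoint homogeneous system, then the LVIE has
solutions and its set of continuous solutions is in bijection (via the load map)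
with an affine subspace of ℝ^{m-1} of dimension (m−1) − r. -/
theorem lvie_solution_family_of_solvable_slae
    (t₀ T : ℝ) (ht : t₀ < T) (m : ℕ) (hm : 2 ≤ m)
    (p : Fin (m - 1) → ℝ) (hpmono : StrictMono p)
    (hp : ∀ j, t₀ < p j ∧ p j < T)
    (f : ℝ → ℝ) (hf : ContinuousOn f (Set.Icc t₀ T))
    (a : Fin (m - 1) → ℝ → ℝ) (ha : ∀ j, ContinuousOn (a j) (Set.Icc t₀ T))
    (K : ℝ → ℝ → ℝ)
    (hK : ContinuousOn (fun q : ℝ × ℝ => K q.1 q.2)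
      {q : ℝ × ℝ | t₀ ≤ q.2 ∧ q.2 ≤ q.1 ∧ q.1 ≤ T})
    (lam₀ : ℝ)
    (Kn : ℕ → ℝ → ℝ → ℝ)
    (hKn1 : ∀ t s, Kn 1 t s = K t s)
    (hKnrec : ∀ n, 2 ≤ n → ∀ t s, Kn n t s = ∫ z in s..t, K t z * Kn (n - 1) z s)
    (R : ℝ → ℝ → ℝ → ℝ)
    (hR : ∀ t s lam', R t s lam' = ∑' n : ℕ, lam' ^ (n + 1) * Kn (n + 1) t s)
    (F : ℝ → ℝ → ℝ)
    (hF : ∀ t lam', F t lam' = f t + ∫ s in t₀..t, R t s lam' * f s)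
    (b : Fin (m - 1) → ℝ → ℝ → ℝ)
    (hb : ∀ j t lam', b j t lam' = a j t + ∫ s in t₀..t, R t s lam' * a j s)
    (A : Matrix (Fin (m - 1)) (Fin (m - 1)) ℝ)
    (hA : ∀ i j, A i j = (if i = j then 1 else 0) + b j (p i) lam₀)
    (d : Fin (m - 1) → ℝ)
    (hd : ∀ i, d i = F (p i) lam₀)
    (r : ℕ)
    (hdet : A.det = 0) (hrank : A.rank = r)
    (horth : ∀ y, Aᵀ *ᵥ y = 0 → d ⬝ᵥ y = 0) :
    (∃ x : C(Set.Icc t₀ T, ℝ),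
      ∀ t ∈ Set.Icc t₀ T,
        Set.IccExtend ht.le x t + ∑ j, a j t * Set.IccExtend ht.le x (p j) =
          lam₀ * (∫ s in t₀..t, K t s * Set.IccExtend ht.le x s) + f t) ∧
    ∃ (c₀ : Fin (m - 1) → ℝ) (W : Submodule ℝ (Fin (m - 1) → ℝ)),
      Module.finrank ℝ W = (m - 1) - r ∧
      {c : Fin (m - 1) → ℝ | A *ᵥ c = d} = (fun w => c₀ + w) '' (W : Set (Fin (m - 1) → ℝ)) ∧
      Set.BijOn
        (fun x : C(Set.Icc t₀ T, ℝ) => fun j => Set.IccExtend ht.le x (p j))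
        {x : C(Set.Icc t₀ T, ℝ) |
          ∀ t ∈ Set.Icc t₀ T,
            Set.IccExtend ht.le x t + ∑ j, a j t * Set.IccExtend ht.le x (p j) =
              lam₀ * (∫ s in t₀..t, K t s * Set.IccExtend ht.le x s) + f t}
        {c : Fin (m - 1) → ℝ | A *ᵥ c = d} := by
  classical
  have hle : t₀ ≤ T := ht.le
  -- extend K continuously
  have hΔc : IsClosed {q : ℝ × ℝ | t₀ ≤ q.2 ∧ q.2 ≤ q.1 ∧ q.1 ≤ T} := by
    have e : {q : ℝ × ℝ | t₀ ≤ q.2 ∧ q.2 ≤ q.1 ∧ q.1 ≤ T} =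
        {q : ℝ × ℝ | t₀ ≤ q.2} ∩ ({q : ℝ × ℝ | q.2 ≤ q.1} ∩ {q : ℝ × ℝ | q.1 ≤ T}) := rfl
    rw [e]
    exact (isClosed_le continuous_const continuous_snd).inter
      ((isClosed_le continuous_snd continuous_fst).inter
        (isClosed_le continuous_fst continuous_const))
  obtain ⟨Ktc, hKtcont, hKteq⟩ := exists_cont_extension hΔc hK
  set Kt : ℝ → ℝ → ℝ := fun u v => Ktc (u, v) with hKtdef
  have hKtc : Continuous fun q : ℝ × ℝ => Kt q.1 q.2 := hKtcont
  obtain ⟨M, hMraw⟩ := (isCompact_Icc.prod isCompact_Icc).exists_bound_of_continuousOn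
    (s := Set.Icc t₀ T ×ˢ Set.Icc t₀ T) hKtcont.continuousOn
  have hM : ∀ u v, u ∈ Set.Icc t₀ T → v ∈ Set.Icc t₀ T → |Kt u v| ≤ M := fun u v hu hv => by
    have := hMraw (u, v) ⟨hu, hv⟩
    rwa [Real.norm_eq_abs] at this
  -- iterated kernels agree
  have hiter : ∀ nn : ℕ, ∀ u s : ℝ, t₀ ≤ s → s ≤ u → u ≤ T →
      iterK Kt nn u s = Kn (nn+1) u s := by
    intro nn
    induction nn with
    | zero =>
      intro u s h1 h2 h3
      rw [hKn1]
      exact hKteq (u, s) ⟨h1, h2, h3⟩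
    | succ nn ih =>
      intro u s h1 h2 h3
      rw [hKnrec (nn+2) (by omega)]
      show (∫ z in s..u, Kt u z * iterK Kt nn z s) = ∫ z in s..u, K u z * Kn (nn+2-1) z s
      have e2 : nn + 2 - 1 = nn + 1 := by omega
      rw [e2]
      apply intervalIntegral.integral_congr
      intro z hz
      rw [Set.uIcc_of_le h2, Set.mem_Icc] at hz
      show Kt u z * iterK Kt nn z s = K u z * Kn (nn+1) z s
      rw [show Kt u z = K u z from hKteq (u, z) ⟨le_trans h1 hz.1, hz.2, h3⟩,
        ih z s h1 hz.1 (le_trans hz.2 h3)]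
  -- resolvent extension
  obtain ⟨Rtc, hRtcont, hRteq⟩ :=
    exists_cont_extension hΔc (Rser_contOn (lam := lam₀) hle hM hKtc)
  set Rt : ℝ → ℝ → ℝ := fun u v => Rtc (u, v) with hRtdef
  have hRtc : Continuous fun q : ℝ × ℝ => Rt q.1 q.2 := hRtcont
  have hRser : ∀ q : ℝ × ℝ, t₀ ≤ q.2 → q.2 ≤ q.1 → q.1 ≤ T →
      Rt q.1 q.2 = ∑' n : ℕ, lam₀ ^ (n+1) * iterK Kt n q.1 q.2 :=
    fun q h1 h2 h3 => hRteq q ⟨h1, h2, h3⟩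
  have hRR : ∀ u s, t₀ ≤ s → s ≤ u → u ≤ T → Rt u s = R u s lam₀ := by
    intro u s h1 h2 h3
    rw [hRser (u, s) h1 h2 h3, hR]
    exact tsum_congr fun n => by rw [hiter n u s h1 h2 h3]
  -- extend f and a
  obtain ⟨fc, hfc, hfeq⟩ := exists_cont_extension (isClosed_Icc (a := t₀) (b := T)) hf
  choose ac hacc haceq using fun j => exists_cont_extension (isClosed_Icc (a := t₀) (b := T)) (ha j)
  -- the family of candidate solutions
  set gcf : (Fin (m-1) → ℝ) → ℝ → ℝ := fun c u => fc u - ∑ j, ac j u * c j with hgcf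
  have hgcfc : ∀ c, Continuous (gcf c) := fun c =>
    hfc.sub (continuous_finset_sum _ fun j _ => (hacc j).mul continuous_const)
  set sol : (Fin (m-1) → ℝ) → ℝ → ℝ :=
    fun c u => gcf c u + ∫ s in t₀..u, Rt u s * gcf c s with hsoldef
  have hRtrow : ∀ u : ℝ, Continuous fun s => Rt u s :=
    fun u => hRtc.comp (continuous_const.prodMk continuous_id)
  have hKtrow : ∀ u : ℝ, Continuous fun s => Kt u s :=
    fun u => hKtc.comp (continuous_const.prodMk continuous_id)
  have hsolc : ∀ c, Continuous (sol c) := by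
    intro c
    apply (hgcfc c).add
    apply intervalIntegral.continuous_parametric_intervalIntegral_of_continuous _ continuous_id
    exact Continuous.mul hRtc ((hgcfc c).comp continuous_snd)
  have hsolve : ∀ c, ∀ u, t₀ ≤ u → u ≤ T →
      sol c u = lam₀ * (∫ s in t₀..u, Kt u s * sol c s) + gcf c u := by
    intro c u h1 h2
    exact volterra_solves hle hKtc hM hRtc hRser (gcf c) (hgcfc c) u h1 h2
  -- representation of sol via F and b
  have hrepr : ∀ c, ∀ u, t₀ ≤ u → u ≤ T →
      sol c u = F u lam₀ - ∑ j, b j u lam₀ * c j := by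
    intro c u h1 h2
    have hint1 : (∫ s in t₀..u, Rt u s * fc s) = F u lam₀ - f u := by
      have e : (∫ s in t₀..u, Rt u s * fc s) = ∫ s in t₀..u, R u s lam₀ * f s := by
        apply intervalIntegral.integral_congr
        intro s hs
        rw [Set.uIcc_of_le h1, Set.mem_Icc] at hs
        show Rt u s * fc s = R u s lam₀ * f s
        rw [hRR u s hs.1 hs.2 h2, hfeq s ⟨hs.1, le_trans hs.2 h2⟩]
      rw [e, hF u lam₀]
      ring
    have hint2 : ∀ j, (∫ s in t₀..u, Rt u s * ac j s) = b j u lam₀ - a j u := by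
      intro j
      have e : (∫ s in t₀..u, Rt u s * ac j s) = ∫ s in t₀..u, R u s lam₀ * a j s := by
        apply intervalIntegral.integral_congr
        intro s hs
        rw [Set.uIcc_of_le h1, Set.mem_Icc] at hs
        show Rt u s * ac j s = R u s lam₀ * a j s
        rw [hRR u s hs.1 hs.2 h2, haceq j s ⟨hs.1, le_trans hs.2 h2⟩]
      rw [e, hb j u lam₀]
      ring
    have hsplit : (∫ s in t₀..u, Rt u s * gcf c s) =
        (∫ s in t₀..u, Rt u s * fc s) - ∑ j, (∫ s in t₀..u, Rt u s * ac j s) * c j := by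
      have e : (fun s => Rt u s * gcf c s) =
          fun s => Rt u s * fc s - ∑ j, (Rt u s * ac j s) * c j := by
        funext s
        show Rt u s * (fc s - ∑ j, ac j s * c j) = _
        rw [mul_sub, Finset.mul_sum]
        congr 1
        exact Finset.sum_congr rfl fun j _ => by ring
      rw [e, intervalIntegral.integral_sub, intervalIntegral.integral_finset_sum]
      · congr 1
        exact Finset.sum_congr rfl fun j _ => by rw [intervalIntegral.integral_mul_const]
      · exact fun j _ =>
          (((hRtrow u).mul (hacc j)).mul continuous_const).intervalIntegrable _ _
      · exact ((hRtrow u).mul hfc).intervalIntegrable _ _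
      · apply Continuous.intervalIntegrable
        exact continuous_finset_sum _ fun j _ => ((hRtrow u).mul (hacc j)).mul continuous_const
    have hgcu : gcf c u = f u - ∑ j, a j u * c j := by
      show fc u - ∑ j, ac j u * c j = _
      rw [hfeq u ⟨h1, h2⟩]
      congr 1
      exact Finset.sum_congr rfl fun j _ => by rw [haceq j u ⟨h1, h2⟩]
    have hsum2 : ∑ j, (∫ s in t₀..u, Rt u s * ac j s) * c j =
        (∑ j, b j u lam₀ * c j) - ∑ j, a j u * c j := by
      rw [← Finset.sum_sub_distrib]
      exact Finset.sum_congr rfl fun j _ => by rw [hint2 j]; ring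
    show gcf c u + (∫ s in t₀..u, Rt u s * gcf c s) = _
    rw [hsplit, hint1, hgcu, hsum2]
    ring
  have hgcval : ∀ c u, t₀ ≤ u → u ≤ T → gcf c u = f u - ∑ j, a j u * c j := by
    intro c u h1 h2
    show fc u - ∑ j, ac j u * c j = _
    rw [hfeq u ⟨h1, h2⟩]
    congr 1
    exact Finset.sum_congr rfl fun j _ => by rw [haceq j u ⟨h1, h2⟩]
  -- every solution agrees with sol of its loads
  have key1 : ∀ x : C(Set.Icc t₀ T, ℝ),
      (∀ u ∈ Set.Icc t₀ T,
        Set.IccExtend ht.le x u + ∑ j, a j u * Set.IccExtend ht.le x (p j) =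
          lam₀ * (∫ s in t₀..u, K u s * Set.IccExtend ht.le x s) + f u) →
      ∀ u ∈ Set.Icc t₀ T,
        Set.IccExtend ht.le (⇑x) u = sol (fun j => Set.IccExtend ht.le (⇑x) (p j)) u := by
    intro x hx
    set X : ℝ → ℝ := Set.IccExtend ht.le ⇑x with hXdef
    set c : Fin (m-1) → ℝ := fun j => X (p j) with hcdef
    have hXcont : Continuous X := x.continuous.Icc_extend'
    have hXeq : ∀ u, t₀ ≤ u → u ≤ T →
        X u = lam₀ * (∫ s in t₀..u, Kt u s * X s) + gcf c u := by
      intro u h1 h2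
      have h0 := hx u ⟨h1, h2⟩
      have e1 : (∫ s in t₀..u, K u s * X s) = ∫ s in t₀..u, Kt u s * X s := by
        apply intervalIntegral.integral_congr
        intro s hs
        rw [Set.uIcc_of_le h1, Set.mem_Icc] at hs
        show K u s * X s = Kt u s * X s
        rw [show Kt u s = K u s from hKteq (u, s) ⟨hs.1, hs.2, h2⟩]
      have e2 := hgcval c u h1 h2
      have e3 : ∑ j, a j u * c j = ∑ j, a j u * X (p j) := rfl
      rw [e2, ← e1, e3]
      linarith [h0]
    have hdiff : ∀ u ∈ Set.Icc t₀ T, (fun v => X v - sol c v) u =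
        lam₀ * ∫ s in t₀..u, Kt u s * (fun v => X v - sol c v) s := by
      intro u hu
      show X u - sol c u = lam₀ * ∫ s in t₀..u, Kt u s * (X s - sol c s)
      have e3 : (∫ s in t₀..u, Kt u s * (X s - sol c s)) =
          (∫ s in t₀..u, Kt u s * X s) - ∫ s in t₀..u, Kt u s * sol c s := by
        rw [← intervalIntegral.integral_sub (f := fun s => Kt u s * X s) (g := fun s => Kt u s * sol c s) (((hKtrow u).mul hXcont).intervalIntegrable _ _)
          (((hKtrow u).mul (hsolc c)).intervalIntegrable _ _)]
        congr 1
        funext s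
        ring
      rw [e3, hXeq u hu.1 hu.2, hsolve c u hu.1 hu.2]
      ring
    have h0 := volterra_unique hle hKtc hM _ ((hXcont.sub (hsolc c)).continuousOn) hdiff
    intro u hu
    exact sub_eq_zero.mp (h0 u hu)
  -- mulVec formula
  have hmulVec : ∀ (c : Fin (m-1) → ℝ) i, (A *ᵥ c) i = c i + ∑ j, b j (p i) lam₀ * c j := by
    intro c i
    show (∑ j, A i j * c j) = _
    have e : ∀ j, A i j * c j = (if i = j then 1 else 0) * c j + b j (p i) lam₀ * c j :=
      fun j => by rw [hA i j]; ring
    rw [Finset.sum_congr rfl (fun j _ => e j), Finset.sum_add_distrib]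
    congr 1
    simp [ite_mul]
  -- every solution's loads satisfy the SLAE
  have key_sys : ∀ x : C(Set.Icc t₀ T, ℝ),
      (∀ u ∈ Set.Icc t₀ T,
        Set.IccExtend ht.le x u + ∑ j, a j u * Set.IccExtend ht.le x (p j) =
          lam₀ * (∫ s in t₀..u, K u s * Set.IccExtend ht.le x s) + f u) →
      A *ᵥ (fun j => Set.IccExtend ht.le (⇑x) (p j)) = d := by
    intro x hx
    funext i
    set c : Fin (m-1) → ℝ := fun j => Set.IccExtend ht.le (⇑x) (p j) with hcdef
    have hci : c i = sol c (p i) := key1 x hx (p i) ⟨(hp i).1.le, (hp i).2.le⟩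
    have h2 := hrepr c (p i) (hp i).1.le (hp i).2.le
    rw [hmulVec c i, hd i]
    rw [h2] at hci
    linarith [hci]
  -- loads satisfying SLAE give solutions
  have hsolpt : ∀ c, A *ᵥ c = d → ∀ i, sol c (p i) = c i := by
    intro c hc i
    have h1 := congrFun hc i
    rw [hmulVec c i, hd i] at h1
    have h2 := hrepr c (p i) (hp i).1.le (hp i).2.le
    linarith [h2]
  have key2 : ∀ c, A *ᵥ c = d →
      ∀ u ∈ Set.Icc t₀ T, sol c u + ∑ j, a j u * sol c (p j) =
        lam₀ * (∫ s in t₀..u, K u s * sol c s) + f u := by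
    intro c hc u hu
    have e1 : (∫ s in t₀..u, K u s * sol c s) = ∫ s in t₀..u, Kt u s * sol c s := by
      apply intervalIntegral.integral_congr
      intro s hs
      rw [Set.uIcc_of_le hu.1, Set.mem_Icc] at hs
      show K u s * sol c s = Kt u s * sol c s
      rw [show Kt u s = K u s from hKteq (u, s) ⟨hs.1, hs.2, hu.2⟩]
    have e2 : ∑ j, a j u * sol c (p j) = ∑ j, a j u * c j :=
      Finset.sum_congr rfl fun j _ => by rw [hsolpt c hc j]
    rw [e1, e2, hsolve c u hu.1 hu.2, hgcval c u hu.1 hu.2]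
    ring
  -- candidate continuous solutions
  have hxc : ∀ c : Fin (m-1) → ℝ, ∃ x : C(Set.Icc t₀ T, ℝ),
      ∀ u ∈ Set.Icc t₀ T, Set.IccExtend ht.le (⇑x) u = sol c u := by
    intro c
    refine ⟨⟨fun v => sol c v, (hsolc c).comp continuous_subtype_val⟩, ?_⟩
    intro u hu
    rw [Set.IccExtend_of_mem ht.le _ hu]
    rfl
  have mem_sol : ∀ c, A *ᵥ c = d → ∀ x : C(Set.Icc t₀ T, ℝ),
      (∀ u ∈ Set.Icc t₀ T, Set.IccExtend ht.le (⇑x) u = sol c u) →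
      (∀ u ∈ Set.Icc t₀ T,
        Set.IccExtend ht.le x u + ∑ j, a j u * Set.IccExtend ht.le x (p j) =
          lam₀ * (∫ s in t₀..u, K u s * Set.IccExtend ht.le x s) + f u) := by
    intro c hc x hxs u hu
    have e1 : (∫ s in t₀..u, K u s * Set.IccExtend ht.le (⇑x) s) =
        ∫ s in t₀..u, K u s * sol c s := by
      apply intervalIntegral.integral_congr
      intro s hs
      rw [Set.uIcc_of_le hu.1, Set.mem_Icc] at hs
      show K u s * Set.IccExtend ht.le (⇑x) s = K u s * sol c s
      rw [hxs s ⟨hs.1, le_trans hs.2 hu.2⟩]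
    have e2 : ∑ j, a j u * Set.IccExtend ht.le (⇑x) (p j) = ∑ j, a j u * sol c (p j) :=
      Finset.sum_congr rfl fun j _ => by rw [hxs (p j) ⟨(hp j).1.le, (hp j).2.le⟩]
    rw [hxs u hu, e1, e2]
    exact key2 c hc u hu
  -- linear algebra
  obtain ⟨c₀, hc₀, W, hWrank, hWset⟩ := slae_solution_affine A d r hrank horth
  obtain ⟨x₀, hx₀⟩ := hxc c₀
  constructor
  · exact ⟨x₀, mem_sol c₀ hc₀ x₀ hx₀⟩
  refine ⟨c₀, W, hWrank, hWset, ?_, ?_, ?_⟩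
  · -- MapsTo
    intro x hx
    exact key_sys x hx
  · -- InjOn
    intro x₁ hx₁ x₂ hx₂ hload
    ext v
    have e1 := key1 x₁ hx₁ v.1 v.2
    have e2 := key1 x₂ hx₂ v.1 v.2
    have hload' : (fun j => Set.IccExtend ht.le (⇑x₁) (p j)) =
        (fun j => Set.IccExtend ht.le (⇑x₂) (p j)) := hload
    rw [hload'] at e1
    have e3 : Set.IccExtend ht.le (⇑x₁) v.1 = Set.IccExtend ht.le (⇑x₂) v.1 := by
      rw [e1, e2]
    rw [Set.IccExtend_of_mem ht.le _ v.2, Set.IccExtend_of_mem ht.le _ v.2] at e3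
    simpa using e3
  · -- SurjOn
    intro c hc
    obtain ⟨x, hxs⟩ := hxc c
    refine ⟨x, mem_sol c hc x hxs, ?_⟩
    funext j
    show Set.IccExtend ht.le (⇑x) (p j) = c j
    rw [hxs (p j) ⟨(hp j).1.le, (hp j).2.le⟩]
    exact hsolpt c hc j
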